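/- Let d ≥ 1, let q ∈ ℝ^{d×d} be symmetric positive semidefinite and let Σ ∈ ℝ^{d×d} be symmetric positive definite. Then tr( q·Σ^{-1}·q ) ≥ tr(q)² / ( d·tr(Σ) ) ≥ 0. -/

import Mathlib

open Matrix
open scoped MatrixOrder

lemma posSemidef_trace_nonneg' {n : ℕ} {A : Matrix (Fin n) (Fin n) ℝ}
    (hA : A.PosSemidef) : 0 ≤ A.trace := by
  rw [Matrix.trace]
  refine Finset.sum_nonneg fun i _ => ?_
  simpa using hA.diag_nonneg

lemma posDef_trace_pos' {n : ℕ} (hn : 1 ≤ n) {A : Matrix (Fin n) (Fin n) ℝ}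
    (hA : A.PosDef) : 0 < A.trace := by
  have hdiag : ∀ i : Fin n, 0 < A.diag i := by
    intro i
    have hne : (Pi.single i 1 : Fin n → ℝ) ≠ 0 := by
      intro h
      have := congrFun h i
      simp at this
    simpa using hA.diag_pos
  rw [Matrix.trace]
  refine Finset.sum_pos (fun i _ => hdiag i) ?_
  have : Nonempty (Fin n) := Fin.pos_iff_nonempty.mp hn
  exact Finset.univ_nonempty

/-- `tr(qΣ⁻¹q) ≥ tr(q)²/(d·tr(Σ)) ≥ 0`. -/
theorem trace_q_Sigma_inv_q_lower_bound
    (d : ℕ) (hd : 1 ≤ d)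
    (q S : Matrix (Fin d) (Fin d) ℝ)
    (hq : q.PosSemidef) (hS : S.PosDef) :
    q.trace ^ 2 / ((d : ℝ) * S.trace) ≤ (q * S⁻¹ * q).trace ∧
      0 ≤ q.trace ^ 2 / ((d : ℝ) * S.trace) := by
  have hSinv : (S⁻¹).PosDef := hS.inv
  set T := CFC.sqrt (S⁻¹) with hTdef
  have hTT : T * T = S⁻¹ := CFC.sqrt_mul_sqrt_self _ hSinv.posSemidef.nonneg
  have hTH : Tᴴ = T := (CFC.sqrt_nonneg (S⁻¹)).posSemidef.1
  have hqH : qᴴ = q := hq.1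
  have hSdet : IsUnit S.det := hS.det_pos.ne'.isUnit
  have hSinvdet : IsUnit (S⁻¹).det := hSinv.det_pos.ne'.isUnit
  have hTdet : IsUnit T.det := by
    have h : IsUnit (T.det * T.det) := by rw [← Matrix.det_mul, hTT]; exact hSinvdet
    exact isUnit_of_mul_isUnit_left h
  have hTinvmul : T⁻¹ * T⁻¹ = S := by
    rw [← Matrix.mul_inv_rev, hTT, Matrix.nonsing_inv_nonsing_inv _ hSdet]
  have hTinvH : (T⁻¹)ᴴ = T⁻¹ := by rw [Matrix.conjTranspose_nonsing_inv, hTH]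
  have htrS : 0 < S.trace := posDef_trace_pos' hd hS
  set t : ℝ := q.trace / S.trace with htdef
  set M : Matrix (Fin d) (Fin d) ℝ := T * q - t • T⁻¹ with hMdef
  have h0 : 0 ≤ (M * Mᴴ).trace :=
    posSemidef_trace_nonneg' (Matrix.posSemidef_self_mul_conjTranspose M)
  have hMH : Mᴴ = q * T - t • T⁻¹ := by
    rw [hMdef, Matrix.conjTranspose_sub, Matrix.conjTranspose_mul, hqH, hTH,
      Matrix.conjTranspose_smul, hTinvH]
    norm_num
  have e1 : (T * q * (q * T)).trace = (q * S⁻¹ * q).trace := by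
    rw [Matrix.trace_mul_comm (T * q) (q * T), mul_assoc q T (T * q),
      ← mul_assoc T T q, hTT, ← mul_assoc]
  have e2 : (T * q * (t • T⁻¹)).trace = t * q.trace := by
    rw [Matrix.mul_smul, Matrix.trace_smul, Matrix.trace_mul_cycle,
      Matrix.nonsing_inv_mul _ hTdet, one_mul, smul_eq_mul]
  have e3 : ((t • T⁻¹) * (q * T)).trace = t * q.trace := by
    rw [Matrix.smul_mul, Matrix.trace_smul, Matrix.trace_mul_comm, mul_assoc,
      Matrix.mul_nonsing_inv _ hTdet, mul_one, smul_eq_mul]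
  have e4 : ((t • T⁻¹) * (t • T⁻¹)).trace = t ^ 2 * S.trace := by
    rw [Matrix.smul_mul, Matrix.mul_smul, Matrix.trace_smul, Matrix.trace_smul,
      hTinvmul, smul_eq_mul, smul_eq_mul]
    ring
  have expand : (M * Mᴴ).trace
      = (q * S⁻¹ * q).trace - 2 * t * q.trace + t ^ 2 * S.trace := by
    rw [hMH, hMdef, Matrix.sub_mul, Matrix.mul_sub, Matrix.mul_sub,
      Matrix.trace_sub, Matrix.trace_sub, Matrix.trace_sub, e1, e2, e3, e4]
    ring
  have key : q.trace ^ 2 / S.trace ≤ (q * S⁻¹ * q).trace := by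
    rw [expand, htdef] at h0
    have hA : (q.trace / S.trace) ^ 2 * S.trace = q.trace ^ 2 / S.trace := by
      field_simp
    have hB : 2 * (q.trace / S.trace) * q.trace = 2 * (q.trace ^ 2 / S.trace) := by
      field_simp
    rw [hA, hB] at h0
    linarith
  constructor
  · calc q.trace ^ 2 / ((d : ℝ) * S.trace) ≤ q.trace ^ 2 / S.trace := by
          apply div_le_div_of_nonneg_left (sq_nonneg _) htrS
          nlinarith [htrS, (by exact_mod_cast hd : (1 : ℝ) ≤ d)]
      _ ≤ (q * S⁻¹ * q).trace := key
  · positivity
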